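/- Reindexing in the existential completion preserves binary infima: for every morphism f : A → B of C and all elements x, y of P^∃(B), P^∃_f(x ∧ y) is equivalent to P^∃_f(x) ∧ P^∃_f(y) in P^∃(A), and P^∃_f preserves the top element. -/

import Mathlib

open CategoryTheory Limits

universe w v u

/-- A primary doctrine: a contravariant assignment of inf-semilattices with top
to objects of `C`, functorial and meet/top-preserving on morphisms. -/
structure PrimaryDoctrine (C : Type u) [Category.{v} C] where
  P : C → Type w
  [instInf : ∀ A, SemilatticeInf (P A)]
  [instTop : ∀ A, OrderTop (P A)]
  map : ∀ {A B : C}, (A ⟶ B) → P B → P A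
  map_id : ∀ (A : C) (α : P A), map (𝟙 A) α = α
  map_comp : ∀ {A B D : C} (f : A ⟶ B) (g : B ⟶ D) (α : P D),
    map (f ≫ g) α = map f (map g α)
  map_mono : ∀ {A B : C} (f : A ⟶ B), Monotone (map f)
  map_top : ∀ {A B : C} (f : A ⟶ B), map f ⊤ = ⊤
  map_inf : ∀ {A B : C} (f : A ⟶ B) (α β : P B), map f (α ⊓ β) = map f α ⊓ map f β

attribute [instance] PrimaryDoctrine.instInf PrimaryDoctrine.instTop

/-- A class `Λ` of morphisms containing identities, closed under composition,
and closed under (chosen) pullbacks along arbitrary morphisms. -/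
structure LambdaClass (C : Type u) [Category.{v} C] where
  mem : ∀ {X Y : C}, (X ⟶ Y) → Prop
  id_mem : ∀ X : C, mem (𝟙 X)
  comp_mem : ∀ {X Y Z : C} {f : X ⟶ Y} {g : Y ⟶ Z}, mem f → mem g → mem (f ≫ g)
  pbObj : ∀ {X Y Z : C} (g : X ⟶ Z), mem g → ∀ _f : Y ⟶ Z, C
  pbFst : ∀ {X Y Z : C} (g : X ⟶ Z) (hg : mem g) (f : Y ⟶ Z), pbObj g hg f ⟶ X
  pbSnd : ∀ {X Y Z : C} (g : X ⟶ Z) (hg : mem g) (f : Y ⟶ Z), pbObj g hg f ⟶ Y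
  isPB : ∀ {X Y Z : C} (g : X ⟶ Z) (hg : mem g) (f : Y ⟶ Z),
    IsPullback (pbFst g hg f) (pbSnd g hg f) g f
  pbSnd_mem : ∀ {X Y Z : C} (g : X ⟶ Z) (hg : mem g) (f : Y ⟶ Z), mem (pbSnd g hg f)

variable {C : Type u} [Category.{v} C]

/-- An element of the fibre `P^∃(A)` of the existential completion:
a pair of a morphism `g : B ⟶ A` in `Λ` and `α ∈ P(B)`. -/
structure ExEl (P : PrimaryDoctrine C) (L : LambdaClass C) (A : C) where
  B : C
  g : B ⟶ A
  hg : L.mem g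
  α : P.P B

variable {P : PrimaryDoctrine C} {L : LambdaClass C}

/-- The preorder on `P^∃(A)`. -/
def ExLe {A : C} (x y : ExEl P L A) : Prop :=
  ∃ w : x.B ⟶ y.B, w ≫ y.g = x.g ∧ x.α ≤ P.map w y.α

/-- Equivalence in the preorder `P^∃(A)`. -/
def ExEquiv {A : C} (x y : ExEl P L A) : Prop := ExLe x y ∧ ExLe y x

/-- The top element `(id_A, ⊤_A)` of `P^∃(A)`. -/
def topE (P : PrimaryDoctrine C) (L : LambdaClass C) (A : C) : ExEl P L A :=
  ⟨A, 𝟙 A, L.id_mem A, ⊤⟩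

/-- Reindexing `P^∃_f` along `f : A ⟶ B`, via the chosen pullback. -/
def reindex {A B : C} (f : A ⟶ B) (y : ExEl P L B) : ExEl P L A :=
  ⟨L.pbObj y.g y.hg f, L.pbSnd y.g y.hg f, L.pbSnd_mem y.g y.hg f,
   P.map (L.pbFst y.g y.hg f) y.α⟩

/-- Binary infimum in `P^∃(A)`, constructed via the chosen pullback. -/
def infE {A : C} (x y : ExEl P L A) : ExEl P L A :=
  ⟨L.pbObj x.g x.hg y.g, L.pbFst x.g x.hg y.g ≫ x.g,
   (by rw [(L.isPB x.g x.hg y.g).w]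
       exact L.comp_mem (L.pbSnd_mem x.g x.hg y.g) y.hg),
   P.map (L.pbFst x.g x.hg y.g) x.α ⊓ P.map (L.pbSnd x.g x.hg y.g) y.α⟩

/-- The left adjoint `∃^e_f` along `f ∈ Λ`, given by post-composition. -/
def existE {A B : C} (f : A ⟶ B) (hf : L.mem f) (x : ExEl P L A) : ExEl P L B :=
  ⟨x.B, x.g ≫ f, L.comp_mem x.hg hf, x.α⟩

/-- The unit `ι_A : P(A) → P^∃(A)`, `α ↦ (id_A, α)`. -/
def iota (P : PrimaryDoctrine C) (L : LambdaClass C) (A : C) (α : P.P A) : ExEl P L A :=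
  ⟨A, 𝟙 A, L.id_mem A, α⟩

/-- Reindexing in the existential completion preserves binary infima and
the top element, up to equivalence in the preorder `P^∃(A)`. -/
theorem reindex_preserves_inf_and_top {A B : C} (f : A ⟶ B) (x y : ExEl P L B) :
    ExEquiv (reindex f (infE x y)) (infE (reindex f x) (reindex f y)) ∧
    ExEquiv (reindex f (topE P L B)) (topE P L A) := by
  have hp := L.isPB x.g x.hg y.g
  have hq := L.isPB (infE x y).g (infE x y).hg f
  have hr := L.isPB x.g x.hg f
  have hu := L.isPB y.g y.hg f
  have hs := L.isPB (reindex f x).g (reindex f x).hg (reindex f y).g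
  -- explicit names as equalities would not help rewriting; use full expressions
  have hqw : L.pbFst (infE x y).g (infE x y).hg f ≫ (L.pbFst x.g x.hg y.g ≫ x.g)
      = L.pbSnd (infE x y).g (infE x y).hg f ≫ f := hq.w
  have hpw : L.pbFst x.g x.hg y.g ≫ x.g = L.pbSnd x.g x.hg y.g ≫ y.g := hp.w
  have hsw : L.pbFst (reindex f x).g (reindex f x).hg (reindex f y).g ≫ L.pbSnd x.g x.hg f
      = L.pbSnd (reindex f x).g (reindex f x).hg (reindex f y).g ≫ L.pbSnd y.g y.hg f := hs.w
  refine ⟨⟨?_, ?_⟩, ?_, ?_⟩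
  · -- reindex f (infE x y) ≤ infE (reindex f x) (reindex f y)
    have hux : (L.pbFst (infE x y).g (infE x y).hg f ≫ L.pbFst x.g x.hg y.g) ≫ x.g
        = L.pbSnd (infE x y).g (infE x y).hg f ≫ f := by erw [Category.assoc, hqw]
    have hvy : (L.pbFst (infE x y).g (infE x y).hg f ≫ L.pbSnd x.g x.hg y.g) ≫ y.g
        = L.pbSnd (infE x y).g (infE x y).hg f ≫ f := by
      erw [Category.assoc, ← hpw, ← Category.assoc, hux]
    have hside : hr.lift _ _ hux ≫ L.pbSnd x.g x.hg f
        = hu.lift _ _ hvy ≫ L.pbSnd y.g y.hg f := by rw [hr.lift_snd, hu.lift_snd]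
    refine ⟨hs.lift (hr.lift _ _ hux) (hu.lift _ _ hvy) hside, ?_, ?_⟩
    · show _ ≫ L.pbFst (reindex f x).g (reindex f x).hg (reindex f y).g ≫ L.pbSnd x.g x.hg f
        = L.pbSnd (infE x y).g (infE x y).hg f
      erw [← Category.assoc, hs.lift_fst, hr.lift_snd]
    · show P.map (L.pbFst (infE x y).g (infE x y).hg f)
          (P.map (L.pbFst x.g x.hg y.g) x.α ⊓ P.map (L.pbSnd x.g x.hg y.g) y.α) ≤
        P.map _ (P.map (L.pbFst (reindex f x).g (reindex f x).hg (reindex f y).g)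
            (P.map (L.pbFst x.g x.hg f) x.α)
          ⊓ P.map (L.pbSnd (reindex f x).g (reindex f x).hg (reindex f y).g)
            (P.map (L.pbFst y.g y.hg f) y.α))
      apply le_of_eq
      simp only [P.map_inf, ← P.map_comp, ← Category.assoc,
        hs.lift_fst, hs.lift_snd, hr.lift_fst, hu.lift_fst]
      erw [P.map_inf, ← P.map_comp, ← P.map_comp, ← P.map_comp, ← P.map_comp, ← P.map_comp, ← P.map_comp]
      erw [hs.lift_fst, hs.lift_snd, hr.lift_fst, hu.lift_fst]
  · -- infE (reindex f x) (reindex f y) ≤ reindex f (infE x y)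
    have htw : (L.pbFst (reindex f x).g (reindex f x).hg (reindex f y).g ≫ L.pbFst x.g x.hg f) ≫ x.g
        = (L.pbSnd (reindex f x).g (reindex f x).hg (reindex f y).g ≫ L.pbFst y.g y.hg f) ≫ y.g := by
      erw [Category.assoc, Category.assoc, hr.w, hu.w,
        ← Category.assoc, ← Category.assoc, hsw]
    have htz : hp.lift _ _ htw ≫ (L.pbFst x.g x.hg y.g ≫ x.g)
        = (L.pbFst (reindex f x).g (reindex f x).hg (reindex f y).g ≫ L.pbSnd x.g x.hg f) ≫ f := by
      erw [← Category.assoc, hp.lift_fst, Category.assoc, hr.w, Category.assoc]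
      rfl
    refine ⟨hq.lift (hp.lift _ _ htw) _ htz, hq.lift_snd .., ?_⟩
    show P.map (L.pbFst (reindex f x).g (reindex f x).hg (reindex f y).g)
          (P.map (L.pbFst x.g x.hg f) x.α)
        ⊓ P.map (L.pbSnd (reindex f x).g (reindex f x).hg (reindex f y).g)
          (P.map (L.pbFst y.g y.hg f) y.α) ≤
      P.map _ (P.map (L.pbFst (infE x y).g (infE x y).hg f)
        (P.map (L.pbFst x.g x.hg y.g) x.α ⊓ P.map (L.pbSnd x.g x.hg y.g) y.α))
    apply le_of_eq
    simp only [P.map_inf, ← P.map_comp, ← Category.assoc,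
      hq.lift_fst, hp.lift_fst, hp.lift_snd]
    erw [P.map_inf, ← P.map_comp, ← P.map_comp, ← P.map_comp, ← P.map_comp, ← P.map_comp, ← P.map_comp]
    erw [hq.lift_fst, hp.lift_fst, hp.lift_snd]
  · -- reindex f top ≤ top
    refine ⟨L.pbSnd (topE P L B).g (topE P L B).hg f, Category.comp_id _, ?_⟩
    show P.map (L.pbFst (topE P L B).g (topE P L B).hg f) (⊤ : P.P B)
      ≤ P.map (L.pbSnd (topE P L B).g (topE P L B).hg f) (⊤ : P.P A)
    erw [P.map_top, P.map_top]
  · -- top ≤ reindex f top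
    have ht := L.isPB (topE P L B).g (topE P L B).hg f
    have hc : f ≫ (topE P L B).g = 𝟙 A ≫ f := by
      show f ≫ 𝟙 B = 𝟙 A ≫ f; simp
    refine ⟨ht.lift f (𝟙 A) hc, ht.lift_snd .., le_of_eq ?_⟩
    show (⊤ : P.P A) = P.map _ (P.map (L.pbFst (topE P L B).g (topE P L B).hg f) (⊤ : P.P B))
    erw [P.map_top, P.map_top]
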